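/- arXiv:2003.13305 — 3 statements merged into one kernel-verified Lean document; each statement's English description precedes it below -/
import Mathlib

section
/- Edwards–Sokal marginal over spin configurations: let G be a finite simple graph with vertex set V and edge set E and let p ∈ [0, 1]. Then for every FK configuration ω ⊆ E, Σ_{σ : V → {−1,1}} μ(σ, ω) = p^{|ω|} · (1 − p)^{|E| − |ω|} · 2^{k(ω)}, where k(ω) is the number of connected components of the spanning subgraph (V, ω). In particular the ω-marginal of the normalized Edwards–Sokal measure is the FK (random-cluster) measure with cluster weight q = 2. -/
open Finset

/-- The product of the spins at the two endpoints of an unordered pair of vertices. -/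
def spinProd {V : Type*} (σ : V → ℝ) : Sym2 V → ℝ :=
  Sym2.lift ⟨fun x y => σ x * σ y, fun _ _ => mul_comm _ _⟩

/-- The Edwards–Sokal weight `μ(σ, ω)` with parameter `p`, edge set `E` and open edge set
`ω`: an edge `e ∉ ω` contributes `1 − p`; an edge `e ∈ ω` contributes `p` if its endpoint
spins agree and `0` otherwise. -/
noncomputable def esWeight {V : Type*} [DecidableEq V] (p : ℝ)
    (E ω : Finset (Sym2 V)) (σ : V → ℝ) : ℝ :=
  ∏ e ∈ E, if e ∈ ω then (if spinProd σ e = 1 then p else 0) else (1 - p)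

/-- Edwards–Sokal marginal over spin configurations: for `p ∈ [0, 1]` and every FK
configuration `ω ⊆ E`,
`∑_{σ : V → {±1}} μ(σ, ω) = p^{|ω|} (1 − p)^{|E| − |ω|} 2^{k(ω)}`, where `k(ω)` is the
number of connected components of the spanning subgraph `(V, ω)`. Spin configurations are
encoded by `s : V → Bool` via `σ v = 1` if `s v` and `σ v = −1` otherwise. -/
theorem edwards_sokal_fk_marginal {V : Type*} [Fintype V] [DecidableEq V]
    (G : SimpleGraph V) [DecidableRel G.Adj] (p : ℝ) (hp0 : 0 ≤ p) (hp1 : p ≤ 1)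
    (ω : Finset (Sym2 V)) (hω : ω ⊆ G.edgeFinset) :
    ∑ s : V → Bool,
        esWeight p G.edgeFinset ω (fun v => if s v then (1 : ℝ) else -1) =
      p ^ ω.card * (1 - p) ^ (G.edgeFinset.card - ω.card) *
        2 ^ Nat.card (SimpleGraph.fromEdgeSet (↑ω : Set (Sym2 V))).ConnectedComponent := by
  classical
  set H := SimpleGraph.fromEdgeSet (↑ω : Set (Sym2 V)) with hH
  set P : (V → Bool) → Prop := fun s => ∀ v w, H.Adj v w → s v = s w with hP
  -- Step 1: compute the weight for each spin configuration
  have key : ∀ s : V → Bool,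
      esWeight p G.edgeFinset ω (fun v => if s v then (1 : ℝ) else -1)
        = (if P s then p ^ ω.card else 0) * (1 - p) ^ (G.edgeFinset.card - ω.card) := by
    intro s
    set σ : V → ℝ := fun v => if s v then (1 : ℝ) else -1 with hσ
    have hspin : ∀ x y : V, (spinProd σ s(x, y) = 1) ↔ s x = s y := by
      intro x y
      simp only [spinProd, Sym2.lift_mk, hσ]
      cases s x <;> cases s y <;> norm_num
    unfold esWeight
    rw [Finset.prod_ite]
    have h1 : G.edgeFinset.filter (· ∈ ω) = ω := by
      rw [Finset.filter_mem_eq_inter]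
      exact Finset.inter_eq_right.mpr hω
    have h2 : (G.edgeFinset.filter (fun e => ¬ e ∈ ω)).card
        = G.edgeFinset.card - ω.card := by
      rw [Finset.filter_not, Finset.card_sdiff_of_subset]
      · rw [h1]
      · rw [h1]; exact hω
    rw [h1, Finset.prod_const, h2]
    congr 1
    -- the product over ω
    have hcond : (∀ e ∈ ω, spinProd σ e = 1) ↔ P s := by
      constructor
      · intro h v w hadj
        rw [hH, SimpleGraph.fromEdgeSet_adj] at hadj
        exact (hspin v w).mp (h _ hadj.1)
      · intro h e he
        induction e with
        | h x y =>
          have hne : x ≠ y := by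
            have := hω he
            rw [SimpleGraph.mem_edgeFinset, SimpleGraph.mem_edgeSet] at this
            exact this.ne
          exact (hspin x y).mpr (h x y ((SimpleGraph.fromEdgeSet_adj _).mpr ⟨he, hne⟩))
    by_cases h : P s
    · rw [if_pos h]
      rw [Finset.prod_congr rfl (fun e he => if_pos ((hcond.mpr h) e he)),
        Finset.prod_const]
    · rw [if_neg h]
      have := mt hcond.mp h
      push_neg at this
      obtain ⟨e, he, hne⟩ := this
      exact Finset.prod_eq_zero he (if_neg hne)
  simp only [key]
  rw [← Finset.sum_mul, Finset.sum_ite, Finset.sum_const, Finset.sum_const, smul_zero,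
    add_zero, nsmul_eq_mul]
  -- Step 2: count the configurations constant on components
  have hcount : (Finset.univ.filter P).card = 2 ^ Nat.card H.ConnectedComponent := by
    have hconst : ∀ (s : V → Bool), P s → ∀ v w, H.Reachable v w → s v = s w := by
      intro s h v w hr
      obtain ⟨pth⟩ := hr
      induction pth with
      | nil => rfl
      | cons hadj _ ih => exact (h _ _ hadj).trans ih
    have e : {s : V → Bool // P s} ≃ (H.ConnectedComponent → Bool) :=
      { toFun := fun s => SimpleGraph.ConnectedComponent.lift s.1
          (fun v w pth _ => hconst s.1 s.2 v w ⟨pth⟩)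
        invFun := fun f => ⟨fun v => f (H.connectedComponentMk v),
          fun v w hadj => congrArg f
            (SimpleGraph.ConnectedComponent.connectedComponentMk_eq_of_adj hadj)⟩
        left_inv := fun s => by ext v; simp [SimpleGraph.ConnectedComponent.lift_mk]
        right_inv := fun f => by
          funext c
          induction c using SimpleGraph.ConnectedComponent.ind with
          | h v => simp [SimpleGraph.ConnectedComponent.lift_mk] }
    have hF : Finite H.ConnectedComponent := Quot.finite _
    have : Fintype H.ConnectedComponent := Fintype.ofFinite _
    rw [← Fintype.card_subtype, Fintype.card_congr e, Fintype.card_fun,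
      Fintype.card_bool, Nat.card_eq_fintype_card]
  rw [hcount]
  push_cast
  ring
end

section
/- Ising spin correlations equal FK connection probabilities: let G be a finite simple graph with vertex set V and edge set E, let β ≥ 0 and p = 1 − e^{−2β}, and let x, y ∈ V. Then ( Σ_{σ : V → {−1,1}} σ_x σ_y e^{β H(σ)} ) / ( Σ_{σ} e^{β H(σ)} ) = ( Σ_{ω ⊆ E, x ↔ y in ω} p^{|ω|} (1 − p)^{|E| − |ω|} 2^{k(ω)} ) / ( Σ_{ω ⊆ E} p^{|ω|} (1 − p)^{|E| − |ω|} 2^{k(ω)} ), where x ↔ y in ω means x and y lie in the same connected component of the spanning subgraph (V, ω); both denominators are strictly positive. -/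
open Finset
open scoped Classical

/-- The proposition that a spin configuration agrees on the two endpoints of an edge. -/
def agreeP {V : Type*} (s : V → Bool) : Sym2 V → Prop :=
  Sym2.lift ⟨fun a b => s a = s b, fun a b => propext ⟨Eq.symm, Eq.symm⟩⟩

lemma agreeP_iff_reachable {V : Type*} (s : V → Bool) (ω : Finset (Sym2 V)) :
    (∀ e ∈ ω, agreeP s e) ↔
      ∀ u v, (SimpleGraph.fromEdgeSet (↑ω : Set (Sym2 V))).Reachable u v → s u = s v := by
  constructor
  · intro h u v hr
    obtain ⟨w⟩ := hr
    induction w with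
    | nil => rfl
    | @cons a b c ha _ ih =>
      rw [SimpleGraph.fromEdgeSet_adj] at ha
      have hab : agreeP s s(a, b) := h _ (by exact_mod_cast ha.1)
      exact (show s a = s b from hab).trans ih
  · intro h e he
    induction e using Sym2.inductionOn with
    | hf a b =>
      by_cases hab : a = b
      · subst hab; exact rfl
      · exact h a b (SimpleGraph.Adj.reachable
          (by rw [SimpleGraph.fromEdgeSet_adj]; exact ⟨by exact_mod_cast he, hab⟩))

lemma sum_const_on_comp {V : Type*} [Fintype V] [DecidableEq V] (Gw : SimpleGraph V)
    [Fintype Gw.ConnectedComponent] (F : (V → Bool) → ℝ) :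
    (∑ s : V → Bool, if (∀ u v, Gw.Reachable u v → s u = s v) then F s else 0)
      = ∑ t : Gw.ConnectedComponent → Bool, F (fun v => t (Gw.connectedComponentMk v)) := by
  classical
  have hΦP : ∀ t : Gw.ConnectedComponent → Bool,
      ∀ u v, Gw.Reachable u v →
        (fun w => t (Gw.connectedComponentMk w)) u = (fun w => t (Gw.connectedComponentMk w)) v := by
    intro t u v hr
    simp only
    rw [SimpleGraph.ConnectedComponent.sound hr]
  let e : (Gw.ConnectedComponent → Bool) ≃
      {s : V → Bool // ∀ u v, Gw.Reachable u v → s u = s v} :=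
  { toFun := fun t => ⟨fun v => t (Gw.connectedComponentMk v), hΦP t⟩
    invFun := fun s c => s.1 (Quot.out c)
    left_inv := by
      intro t
      funext c
      show t (Gw.connectedComponentMk (Quot.out c)) = t c
      exact congrArg t (Quot.out_eq c)
    right_inv := by
      intro s
      apply Subtype.ext
      funext v
      show s.1 (Quot.out (Gw.connectedComponentMk v)) = s.1 v
      exact s.2 _ _ (SimpleGraph.ConnectedComponent.eq.mp (Quot.out_eq _)) }
  calc (∑ s : V → Bool,
        if (∀ u v, Gw.Reachable u v → s u = s v) then F s else 0)
      = ∑ s ∈ Finset.univ.filter (fun s : V → Bool => ∀ u v, Gw.Reachable u v → s u = s v),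
          F s := (Finset.sum_filter _ _).symm
    _ = ∑ s : {s : V → Bool // ∀ u v, Gw.Reachable u v → s u = s v}, F s.1 := by
        refine Finset.sum_subtype _ (fun s => ?_) F
        simp
    _ = ∑ t : Gw.ConnectedComponent → Bool, F ((e t) : V → Bool) := (Equiv.sum_comp e _).symm
    _ = ∑ t : Gw.ConnectedComponent → Bool, F (fun v => t (Gw.connectedComponentMk v)) := rfl

lemma count_one {V : Type*} [Fintype V] [DecidableEq V] (Gw : SimpleGraph V) :
    (∑ s : V → Bool, if (∀ u v, Gw.Reachable u v → s u = s v) then (1:ℝ) else 0)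
      = 2 ^ Nat.card Gw.ConnectedComponent := by
  haveI : Fintype Gw.ConnectedComponent := Fintype.ofFinite _
  rw [sum_const_on_comp Gw (fun _ => (1:ℝ)), Finset.sum_const, Finset.card_univ,
    nsmul_eq_mul, mul_one, Fintype.card_fun, Fintype.card_bool, Nat.card_eq_fintype_card]
  push_cast
  ring

lemma count_spin {V : Type*} [Fintype V] [DecidableEq V] (Gw : SimpleGraph V) (x y : V) :
    (∑ s : V → Bool, if (∀ u v, Gw.Reachable u v → s u = s v)
        then (if s x then (1:ℝ) else -1) * (if s y then (1:ℝ) else -1) else 0)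
      = if Gw.Reachable x y then (2:ℝ) ^ Nat.card Gw.ConnectedComponent else 0 := by
  haveI : Fintype Gw.ConnectedComponent := Fintype.ofFinite _
  rw [sum_const_on_comp Gw
    (fun s => (if s x then (1:ℝ) else -1) * (if s y then (1:ℝ) else -1))]
  by_cases hxy : Gw.Reachable x y
  · rw [if_pos hxy]
    have hc : Gw.connectedComponentMk x = Gw.connectedComponentMk y :=
      SimpleGraph.ConnectedComponent.sound hxy
    have h1 : ∀ t : Gw.ConnectedComponent → Bool,
        (if t (Gw.connectedComponentMk x) then (1:ℝ) else -1) *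
          (if t (Gw.connectedComponentMk y) then (1:ℝ) else -1) = 1 := by
      intro t
      rw [hc]
      cases t (Gw.connectedComponentMk y) <;> norm_num
    rw [Finset.sum_congr rfl fun t _ => h1 t, Finset.sum_const, Finset.card_univ,
      nsmul_eq_mul, mul_one, Fintype.card_fun, Fintype.card_bool, Nat.card_eq_fintype_card]
    push_cast
    ring
  · rw [if_neg hxy]
    have hc : Gw.connectedComponentMk x ≠ Gw.connectedComponentMk y :=
      fun h => hxy (SimpleGraph.ConnectedComponent.eq.mp h)
    refine Finset.sum_involution
      (fun t _ => Function.update t (Gw.connectedComponentMk x)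
        (!(t (Gw.connectedComponentMk x)))) ?_ ?_ (fun _ _ => Finset.mem_univ _) ?_
    · intro t _
      simp only [Function.update_self, Function.update_of_ne (Ne.symm hc)]
      have flip : ∀ b : Bool, (if (!b) = true then (1:ℝ) else -1)
          = -(if b = true then 1 else -1) := by
        intro b; cases b <;> norm_num
      rw [flip]
      ring
    · intro t _ _ h
      have := congrFun h (Gw.connectedComponentMk x)
      simp at this
    · intro t _
      funext z
      rcases eq_or_ne z (Gw.connectedComponentMk x) with hz | hz
      · subst hz; simp
      · simp [Function.update_of_ne hz]

lemma exp_factor {V : Type*} (β q : ℝ) (hq : q = 1 - Real.exp (-2 * β)) (s : V → Bool)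
    (e : Sym2 V) :
    Real.exp (β * spinProd (fun v => if s v then (1:ℝ) else -1) e)
      = Real.exp β * (q * (if agreeP s e then 1 else 0) + (1 - q)) := by
  induction e using Sym2.inductionOn with
  | hf a b =>
    have hsp : spinProd (fun v => if s v then (1:ℝ) else -1) s(a, b)
        = (if s a then (1:ℝ) else -1) * (if s b then (1:ℝ) else -1) := rfl
    by_cases h : s a = s b
    · have h1 : (if s a then (1:ℝ) else -1) * (if s b then (1:ℝ) else -1) = 1 := by
        rw [h]; cases s b <;> norm_num
      rw [hsp, h1, if_pos (show agreeP s s(a, b) from h), mul_one,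
        show q * 1 + (1 - q) = 1 by ring, mul_one]
    · have h1 : (if s a then (1:ℝ) else -1) * (if s b then (1:ℝ) else -1) = -1 := by
        cases ha : s a <;> cases hb : s b <;> simp_all
      rw [hsp, h1, if_neg (show ¬ agreeP s s(a, b) from h), mul_zero, zero_add, hq,
        show (1 : ℝ) - (1 - Real.exp (-2 * β)) = Real.exp (-2 * β) by ring,
        ← Real.exp_add, show β * -1 = β + -2 * β by ring]

/-- Ising spin correlations equal FK connection probabilities: for `β ≥ 0`,
`p = 1 − e^{−2β}` and vertices `x, y`,
`⟨σ_x σ_y⟩ = P_ρ[x ↔ y]`, i.e.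
`(∑_σ σ_x σ_y e^{β H(σ)}) / (∑_σ e^{β H(σ)})` equals
`(∑_{ω ⊆ E, x ↔ y in ω} p^{|ω|}(1−p)^{|E|−|ω|} 2^{k(ω)}) / (∑_{ω ⊆ E} p^{|ω|}(1−p)^{|E|−|ω|} 2^{k(ω)})`,
and both denominators are strictly positive. Spin configurations are encoded by
`s : V → Bool` via `σ v = 1` if `s v` and `σ v = −1` otherwise. -/
theorem ising_correlation_eq_fk_connection {V : Type*} [Fintype V] [DecidableEq V]
    (G : SimpleGraph V) [DecidableRel G.Adj] (β : ℝ) (hβ : 0 ≤ β)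
    (p : ℝ) (hp : p = 1 - Real.exp (-2 * β)) (x y : V) :
    let spin : (V → Bool) → V → ℝ := fun s v => if s v then 1 else -1
    let H : (V → Bool) → ℝ := fun s => ∑ e ∈ G.edgeFinset, spinProd (spin s) e
    let fkWeight : Finset (Sym2 V) → ℝ := fun ω =>
      p ^ ω.card * (1 - p) ^ (G.edgeFinset.card - ω.card) *
        2 ^ Nat.card (SimpleGraph.fromEdgeSet (↑ω : Set (Sym2 V))).ConnectedComponent
    0 < (∑ s : V → Bool, Real.exp (β * H s)) ∧
    0 < (∑ ω ∈ G.edgeFinset.powerset, fkWeight ω) ∧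
    (∑ s : V → Bool, spin s x * spin s y * Real.exp (β * H s)) /
        (∑ s : V → Bool, Real.exp (β * H s)) =
      (∑ ω ∈ G.edgeFinset.powerset,
          if (SimpleGraph.fromEdgeSet (↑ω : Set (Sym2 V))).Reachable x y
          then fkWeight ω else 0) /
        (∑ ω ∈ G.edgeFinset.powerset, fkWeight ω) := by
  intro spin H fkWeight
  have h1p : 1 - p = Real.exp (-2 * β) := by rw [hp]; ring
  have h1p0 : 0 < 1 - p := by rw [h1p]; exact Real.exp_pos _
  have hp0 : 0 ≤ p := by
    rw [hp]
    have : Real.exp (-2 * β) ≤ 1 := Real.exp_le_one_iff.mpr (by linarith)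
    linarith
  set m := G.edgeFinset.card with hm
  -- nonnegativity and positivity of FK weights
  have hfk : ∀ ω : Finset (Sym2 V), 0 ≤ fkWeight ω := by
    intro ω
    show 0 ≤ p ^ ω.card * (1 - p) ^ (m - ω.card) *
      2 ^ Nat.card (SimpleGraph.fromEdgeSet (↑ω : Set (Sym2 V))).ConnectedComponent
    exact mul_nonneg (mul_nonneg (pow_nonneg hp0 _) (pow_nonneg h1p0.le _))
      (pow_nonneg (by norm_num) _)
  have posB : 0 < ∑ ω ∈ G.edgeFinset.powerset, fkWeight ω := by
    refine Finset.sum_pos' (fun ω _ => hfk ω) ⟨∅, Finset.empty_mem_powerset _, ?_⟩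
    show 0 < p ^ (∅ : Finset (Sym2 V)).card * (1 - p) ^ (m - (∅ : Finset (Sym2 V)).card) *
      2 ^ Nat.card (SimpleGraph.fromEdgeSet
        (↑(∅ : Finset (Sym2 V)) : Set (Sym2 V))).ConnectedComponent
    rw [Finset.card_empty, pow_zero, one_mul]
    exact mul_pos (pow_pos h1p0 _) (pow_pos (by norm_num) _)
  have posA : 0 < ∑ s : V → Bool, Real.exp (β * H s) :=
    Finset.sum_pos (fun _ _ => Real.exp_pos _) Finset.univ_nonempty
  -- expansion of the Boltzmann factor
  have hExp : ∀ s : V → Bool, Real.exp (β * H s)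
      = Real.exp β ^ m * ∑ ω ∈ G.edgeFinset.powerset,
          (p ^ ω.card * (1 - p) ^ (m - ω.card)) *
            ∏ e ∈ ω, (if agreeP s e then (1:ℝ) else 0) := by
    intro s
    have h0 : β * H s = ∑ e ∈ G.edgeFinset, β * spinProd (spin s) e := by
      show β * ∑ e ∈ G.edgeFinset, spinProd (spin s) e = _
      rw [Finset.mul_sum]
    rw [h0, Real.exp_sum]
    have h1 : ∀ e ∈ G.edgeFinset, Real.exp (β * spinProd (spin s) e)
        = Real.exp β * ((p * (if agreeP s e then 1 else 0)) + (1 - p)) :=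
      fun e _ => exp_factor β p hp s e
    rw [Finset.prod_congr rfl h1, Finset.prod_mul_distrib, Finset.prod_const]
    congr 1
    rw [Finset.prod_add]
    refine Finset.sum_congr rfl fun t ht => ?_
    have hsub : t ⊆ G.edgeFinset := Finset.mem_powerset.mp ht
    rw [Finset.prod_mul_distrib, Finset.prod_const, Finset.prod_const,
      Finset.card_sdiff_of_subset hsub]
    ring
  -- the indicator identity
  have hχ : ∀ (s : V → Bool) (ω : Finset (Sym2 V)),
      (∏ e ∈ ω, if agreeP s e then (1:ℝ) else 0)
        = if (∀ u v, (SimpleGraph.fromEdgeSet (↑ω : Set (Sym2 V))).Reachable u v → s u = s v)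
          then (1:ℝ) else 0 := by
    intro s ω
    rw [Finset.prod_boole]
    simp only [agreeP_iff_reachable]
  -- denominator identity
  have hDen : (∑ s : V → Bool, Real.exp (β * H s))
      = Real.exp β ^ m * ∑ ω ∈ G.edgeFinset.powerset, fkWeight ω := by
    calc (∑ s : V → Bool, Real.exp (β * H s))
        = ∑ s : V → Bool, Real.exp β ^ m * ∑ ω ∈ G.edgeFinset.powerset,
            (p ^ ω.card * (1 - p) ^ (m - ω.card)) *
              ∏ e ∈ ω, (if agreeP s e then (1:ℝ) else 0) :=
          Finset.sum_congr rfl fun s _ => hExp s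
      _ = Real.exp β ^ m * ∑ ω ∈ G.edgeFinset.powerset,
            (p ^ ω.card * (1 - p) ^ (m - ω.card)) *
              ∑ s : V → Bool, ∏ e ∈ ω, (if agreeP s e then (1:ℝ) else 0) := by
          rw [← Finset.mul_sum]
          congr 1
          rw [Finset.sum_comm]
          exact Finset.sum_congr rfl fun ω _ => (Finset.mul_sum _ _ _).symm
      _ = Real.exp β ^ m * ∑ ω ∈ G.edgeFinset.powerset, fkWeight ω := by
          congr 1
          refine Finset.sum_congr rfl fun ω _ => ?_
          simp only [hχ]
          convert congrArg (fun z => p ^ ω.card * (1 - p) ^ (m - ω.card) * z)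
            (count_one (SimpleGraph.fromEdgeSet (↑ω : Set (Sym2 V))))
  -- numerator identity
  have hNum : (∑ s : V → Bool, spin s x * spin s y * Real.exp (β * H s))
      = Real.exp β ^ m * ∑ ω ∈ G.edgeFinset.powerset,
          (if (SimpleGraph.fromEdgeSet (↑ω : Set (Sym2 V))).Reachable x y
            then fkWeight ω else 0) := by
    have key : ∀ s : V → Bool, spin s x * spin s y * Real.exp (β * H s)
        = ∑ ω ∈ G.edgeFinset.powerset,
            (Real.exp β ^ m * (p ^ ω.card * (1 - p) ^ (m - ω.card))) *
              (spin s x * spin s y * ∏ e ∈ ω, (if agreeP s e then (1:ℝ) else 0)) := by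
      intro s
      rw [hExp s, Finset.mul_sum, Finset.mul_sum]
      exact Finset.sum_congr rfl fun ω _ => by ring
    rw [Finset.sum_congr rfl fun s _ => key s, Finset.sum_comm, Finset.mul_sum]
    refine Finset.sum_congr rfl fun ω _ => ?_
    rw [← Finset.mul_sum]
    have hterm : ∀ s : V → Bool,
        spin s x * spin s y * ∏ e ∈ ω, (if agreeP s e then (1:ℝ) else 0)
          = if (∀ u v, (SimpleGraph.fromEdgeSet (↑ω : Set (Sym2 V))).Reachable u v → s u = s v)
            then (if s x then (1:ℝ) else -1) * (if s y then (1:ℝ) else -1) else 0 := by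
      intro s
      rw [hχ s ω, mul_ite, mul_one, mul_zero]
    rw [Finset.sum_congr rfl fun s _ => hterm s]
    rw [show (∑ s : V → Bool, if (∀ u v, (SimpleGraph.fromEdgeSet (↑ω : Set (Sym2 V))).Reachable u v → s u = s v)
        then (if s x then (1:ℝ) else -1) * (if s y then (1:ℝ) else -1) else 0)
        = if (SimpleGraph.fromEdgeSet (↑ω : Set (Sym2 V))).Reachable x y then
          (2:ℝ) ^ Nat.card (SimpleGraph.fromEdgeSet (↑ω : Set (Sym2 V))).ConnectedComponent else 0 from by
      convert count_spin (SimpleGraph.fromEdgeSet (↑ω : Set (Sym2 V))) x y]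
    rw [mul_ite, mul_ite, mul_zero, mul_zero]
    refine if_congr Iff.rfl ?_ rfl
    show Real.exp β ^ m * (p ^ ω.card * (1 - p) ^ (m - ω.card)) *
        (2:ℝ) ^ Nat.card (SimpleGraph.fromEdgeSet (↑ω : Set (Sym2 V))).ConnectedComponent
      = Real.exp β ^ m * (p ^ ω.card * (1 - p) ^ (m - ω.card) *
        2 ^ Nat.card (SimpleGraph.fromEdgeSet (↑ω : Set (Sym2 V))).ConnectedComponent)
    ring
  refine ⟨posA, posB, ?_⟩
  rw [hNum, hDen, mul_div_mul_left _ _ (ne_of_gt (pow_pos (Real.exp_pos β) m))]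
end

section
/- Edwards–Sokal coupling with a disorder set, marginal over edge configurations: let G be a finite simple graph with vertex set V and edge set E, let λ ⊆ E, let β ≥ 0 and p = 1 − e^{−2β}. Then for every spin configuration σ : V → {−1, 1}, Σ_{ω ⊆ E} μ_λ(σ, ω) = e^{−β|E|} · e^{β H(σ)} · e^{−2β H_λ(σ)}, where H(σ) = Σ_{{x,y} ∈ E} σ_x σ_y and H_λ(σ) = Σ_{{x,y} ∈ λ} σ_x σ_y. In particular the σ-marginal of the normalized coupling is proportional to e^{−2β H_λ(σ)} π_β(σ), the Ising measure twisted by the disorder factor. -/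
open Finset

/-- The Edwards–Sokal weight `μ_L(σ, ω)` with disorder (edge) set `L`, parameter `p`, edge
set `E` and open edge set `ω`: an edge `e ∉ ω` contributes `1 − p`; an edge `e ∈ ω` not in
`L` contributes `p` if its endpoint spins agree and `0` otherwise, while an edge `e ∈ ω ∩ L`
contributes `p` if its endpoint spins disagree and `0` otherwise. -/
noncomputable def esWeightDisorder {V : Type*} [DecidableEq V] (p : ℝ)
    (E L ω : Finset (Sym2 V)) (σ : V → ℝ) : ℝ :=
  ∏ e ∈ E,
    if e ∈ L then
      (if e ∈ ω then (if spinProd σ e = 1 then 0 else p) else (1 - p))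
    else
      (if e ∈ ω then (if spinProd σ e = 1 then p else 0) else (1 - p))

/-- Edwards–Sokal coupling with a disorder set, marginal over edge configurations: for
`β ≥ 0`, `p = 1 − e^{−2β}`, `L ⊆ E` and any `±1`-valued spin configuration `σ`,
`∑_{ω ⊆ E} μ_L(σ, ω) = e^{−β|E|} · e^{β H(σ)} · e^{−2β H_L(σ)}`, where
`H(σ) = ∑_{{x,y} ∈ E} σ_x σ_y` and `H_L(σ) = ∑_{{x,y} ∈ L} σ_x σ_y`. -/
theorem edwards_sokal_disorder_spin_marginal {V : Type*} [Fintype V] [DecidableEq V]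
    (G : SimpleGraph V) [DecidableRel G.Adj]
    (L : Finset (Sym2 V)) (hL : L ⊆ G.edgeFinset)
    (β : ℝ) (hβ : 0 ≤ β) (p : ℝ) (hp : p = 1 - Real.exp (-2 * β))
    (σ : V → ℝ) (hσ : ∀ v, σ v = 1 ∨ σ v = -1) :
    ∑ ω ∈ G.edgeFinset.powerset, esWeightDisorder p G.edgeFinset L ω σ =
      Real.exp (-β * (G.edgeFinset.card : ℝ)) *
        Real.exp (β * ∑ e ∈ G.edgeFinset, spinProd σ e) *
        Real.exp (-2 * β * ∑ e ∈ L, spinProd σ e) := by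
  classical
  set E := G.edgeFinset with hE
  set A : Sym2 V → ℝ := fun e =>
    if e ∈ L then (if spinProd σ e = 1 then 0 else p)
    else (if spinProd σ e = 1 then p else 0) with hA
  have hs : ∀ e : Sym2 V, spinProd σ e = 1 ∨ spinProd σ e = -1 := by
    intro e
    induction e using Sym2.ind with
    | _ x y =>
      simp only [spinProd, Sym2.lift_mk]
      rcases hσ x with h | h <;> rcases hσ y with h' | h' <;> simp [h, h']
  have key : ∑ ω ∈ E.powerset, esWeightDisorder p E L ω σ
      = ∏ e ∈ E, (A e + (1 - p)) := by
    rw [Finset.prod_add]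
    apply Finset.sum_congr rfl
    intro ω hω
    rw [Finset.mem_powerset] at hω
    unfold esWeightDisorder
    have : ∀ e ∈ E,
        (if e ∈ L then
          (if e ∈ ω then (if spinProd σ e = 1 then 0 else p) else (1 - p))
        else
          (if e ∈ ω then (if spinProd σ e = 1 then p else 0) else (1 - p)))
        = (if e ∈ ω then A e else (1 - p)) := by
      intro e _
      by_cases h1 : e ∈ L <;> by_cases h2 : e ∈ ω <;> simp [hA, h1, h2]
    rw [Finset.prod_congr rfl this, ← Finset.prod_sdiff hω]
    rw [Finset.prod_congr rfl (fun e he => if_neg (Finset.mem_sdiff.mp he).2),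
      Finset.prod_congr rfl (fun e (he : e ∈ ω) => if_pos he)]
    ring
  rw [key]
  have step : ∀ e ∈ E, A e + (1 - p)
      = Real.exp (-β) * Real.exp (β * spinProd σ e) *
        (if e ∈ L then Real.exp (-2 * β * spinProd σ e) else 1) := by
    intro e _
    have h1p : 1 - p = Real.exp (-2 * β) := by rw [hp]; ring
    have hne : (-1 : ℝ) ≠ 1 := by norm_num
    have hone : p + (1 - p) = 1 := by ring
    rcases hs e with h | h <;> by_cases hl : e ∈ L <;>
        simp only [hA, h, hl, if_true, if_false, ite_true, ite_false, if_neg hne,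
          zero_add, mul_one]
    · rw [h1p, ← Real.exp_add, ← Real.exp_add]; congr 1; ring
    · rw [hone, ← Real.exp_add, show -β + β = 0 by ring, Real.exp_zero]
    · rw [hone, ← Real.exp_add, ← Real.exp_add,
        show -β + β * -1 + -2 * β * -1 = 0 by ring, Real.exp_zero]
    · rw [h1p, ← Real.exp_add]; congr 1; ring
  rw [Finset.prod_congr rfl step, Finset.prod_mul_distrib, Finset.prod_mul_distrib]
  congr 1
  · congr 1
    · rw [Finset.prod_const, ← Real.exp_nat_mul]
      ring_nf
    · rw [← Real.exp_sum, Finset.mul_sum]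
  · rw [← Finset.prod_filter, Finset.filter_mem_eq_inter,
      Finset.inter_eq_right.mpr hL, ← Real.exp_sum, Finset.mul_sum]
end
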